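/- Let G be an n-resource selection game with continuous (nondecreasing) cost functions f_1, …, f_n. If P_G ≠ {1,…,n}, then h_G > h_{G−P_G}, where G − P_G is the game obtained from G by removing the resources in P_G. -/

import Mathlib

open scoped NNReal

/-- `EqDistOn n f S t h`: the total mass `t` admits an equalizing distribution
among the functions `(f k)_{k ∈ S}` with common value `h`; when this holds, the
equalization `Eq⟨f_k : k ∈ S⟩(t)` is defined and equals `h`. -/
def EqDistOn (n : ℕ) (f : Fin n → ℝ≥0 → ℝ) (S : Finset (Fin n)) (t : ℝ≥0) (h : ℝ) : Prop :=
  ∃ ν : Fin n → ℝ≥0, ∑ k ∈ S, ν k = t ∧ ∀ k ∈ S, f k (ν k) = h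

/-- The total mass `Σ {μ R : ∅ ≠ R ⊆ S}` of the player types that may consume
only from resources in `S`. -/
def innerMass (n : ℕ) (μ : Finset (Fin n) → ℝ≥0) (S : Finset (Fin n)) : ℝ≥0 :=
  ∑ R ∈ S.powerset.filter (fun R => R.Nonempty), μ R

/-- The total mass `Σ {μ R : ∅ ≠ R ⊆ S, R ∩ S' ≠ ∅}` of the player types
within `S` that may consume from some resource of `S'`. -/
def touchMass (n : ℕ) (μ : Finset (Fin n) → ℝ≥0) (S S' : Finset (Fin n)) : ℝ≥0 :=
  ∑ R ∈ S.powerset.filter (fun R => R.Nonempty ∧ (R ∩ S').Nonempty), μ R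

/-- `MemD n f μ V S e`: the nonempty set `S` of resources of the game with
resource set `V` is an element of `D_G` with `E_G(S) = e`, i.e., `E_G(S)` is
defined and equals `e` and `M_G(S) = ∅` (for every nonempty `S' ⊆ S` there is
some `t ≤ touchMass S S'` whose equalization among `(f k)_{k ∈ S'}` is defined
and equals `e`). -/
def MemD (n : ℕ) (f : Fin n → ℝ≥0 → ℝ) (μ : Finset (Fin n) → ℝ≥0)
    (V : Finset (Fin n)) (S : Finset (Fin n)) (e : ℝ) : Prop :=
  S.Nonempty ∧ S ⊆ V ∧ EqDistOn n f S (innerMass n μ S) e ∧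
  ∀ S' ⊆ S, S'.Nonempty → ∃ t ≤ touchMass n μ S S', EqDistOn n f S' t e

/-- `IsHG n f μ V h`: `h` is the maximum `h_G = max_{S ∈ D_G} E_G(S)` of the
game with cost functions `f`, masses `μ` and resource set `V`. -/
def IsHG (n : ℕ) (f : Fin n → ℝ≥0 → ℝ) (μ : Finset (Fin n) → ℝ≥0)
    (V : Finset (Fin n)) (h : ℝ) : Prop :=
  (∃ S, MemD n f μ V S h) ∧ ∀ S e, MemD n f μ V S e → e ≤ h

namespace PistonsAux

noncomputable def aMin (f : ℝ≥0 → ℝ) (L : ℝ) : ℝ≥0 := sInf {x | f x = L}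

lemma f_aMin {f : ℝ≥0 → ℝ} (hcont : Continuous f) {L : ℝ} (h : ∃ x, f x = L) :
    f (aMin f L) = L := by
  have hcl : IsClosed {x : ℝ≥0 | f x = L} := isClosed_eq hcont continuous_const
  exact hcl.csInf_mem h (OrderBot.bddBelow _)

lemma aMin_le {f : ℝ≥0 → ℝ} {L : ℝ} {x : ℝ≥0} (h : f x = L) : aMin f L ≤ x :=
  csInf_le (OrderBot.bddBelow _) h

lemma att_of_le {f : ℝ≥0 → ℝ} (hcont : Continuous f)
    {L L' : ℝ} (h' : ∃ x, f x = L') (h0 : f 0 ≤ L) (hLL' : L ≤ L') :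
    ∃ x, x ≤ aMin f L' ∧ f x = L := by
  have hfa : f (aMin f L') = L' := f_aMin hcont h'
  have hmem : L ∈ Set.Icc (f 0) (f (aMin f L')) := ⟨h0, by rw [hfa]; exact hLL'⟩
  obtain ⟨c, hc, hfc⟩ := intermediate_value_Icc zero_le hcont.continuousOn hmem
  exact ⟨c, hc.2, hfc⟩

lemma aMin_mono {f : ℝ≥0 → ℝ} (hmono : Monotone f) (hcont : Continuous f)
    {L L' : ℝ} (h : ∃ x, f x = L) (h' : ∃ x, f x = L') (hLL' : L ≤ L') :
    aMin f L ≤ aMin f L' := by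
  obtain ⟨x0, hx0⟩ := h
  have h0 : f 0 ≤ L := hx0 ▸ hmono (zero_le : 0 ≤ x0)
  obtain ⟨c, hc1, hc2⟩ := att_of_le hcont h' h0 hLL'
  exact le_trans (aMin_le hc2) hc1

lemma sum_sum_le {α : Type*} [DecidableEq α] {F1 F2 F : Finset α} (w : α → ℝ≥0)
    (h1 : F1 ⊆ F) (h2 : F2 ⊆ F) (hd : Disjoint F1 F2) :
    ∑ x ∈ F1, w x + ∑ x ∈ F2, w x ≤ ∑ x ∈ F, w x := by
  rw [← Finset.sum_union hd]
  exact Finset.sum_le_sum_of_subset (Finset.union_subset h1 h2)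

lemma touch_self (n : ℕ) (μ : Finset (Fin n) → ℝ≥0) (W : Finset (Fin n)) :
    touchMass n μ W W = innerMass n μ W := by
  unfold touchMass innerMass
  apply Finset.sum_congr _ (fun _ _ => rfl)
  apply Finset.filter_congr
  intro R hR
  rw [Finset.mem_powerset] at hR
  rw [Finset.inter_eq_left.2 hR]
  exact ⟨fun h => h.1, fun h => ⟨h, h⟩⟩

lemma inner_split (n : ℕ) (μ : Finset (Fin n) → ℝ≥0) {W S' : Finset (Fin n)} (h : S' ⊆ W) :
    innerMass n μ W = touchMass n μ W S' + innerMass n μ (W \ S') := by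
  classical
  unfold innerMass touchMass
  rw [← Finset.sum_filter_add_sum_filter_not (W.powerset.filter (fun R => R.Nonempty))
    (fun R => (R ∩ S').Nonempty)]
  congr 1
  · rw [Finset.filter_filter]
  · rw [Finset.filter_filter]
    apply Finset.sum_congr _ (fun _ _ => rfl)
    ext R
    simp only [Finset.mem_filter, Finset.mem_powerset, Finset.not_nonempty_iff_eq_empty]
    constructor
    · rintro ⟨hRW, hne, hint⟩
      refine ⟨fun x hx => Finset.mem_sdiff.2 ⟨hRW hx, fun hxS => ?_⟩, hne⟩
      exact Finset.notMem_empty x (hint ▸ Finset.mem_inter.2 ⟨hx, hxS⟩)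
    · rintro ⟨hRWS, hne⟩
      refine ⟨fun x hx => (Finset.mem_sdiff.1 (hRWS hx)).1, hne, ?_⟩
      rw [Finset.eq_empty_iff_forall_notMem]
      intro x hx
      obtain ⟨hx1, hx2⟩ := Finset.mem_inter.1 hx
      exact (Finset.mem_sdiff.1 (hRWS hx1)).2 hx2


lemma touch_fiber (n : ℕ) (μ μ' : Finset (Fin n) → ℝ≥0) (PG : Finset (Fin n))
    (hμ' : ∀ R' : Finset (Fin n),
      μ' R' = ∑ R ∈ Finset.univ.filter (fun R : Finset (Fin n) => R.Nonempty ∧ R \ PG = R'), μ R)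
    (T B' : Finset (Fin n)) :
    touchMass n μ' T B' =
      ∑ R ∈ Finset.univ.filter (fun R : Finset (Fin n) =>
        R.Nonempty ∧ (R \ PG).Nonempty ∧ R \ PG ⊆ T ∧ ((R \ PG) ∩ B').Nonempty), μ R := by
  classical
  unfold touchMass
  rw [← Finset.sum_fiberwise_of_maps_to (t := T.powerset.filter
      (fun R' => R'.Nonempty ∧ (R' ∩ B').Nonempty)) (g := fun R => R \ PG) ?hmap μ]
  · apply Finset.sum_congr rfl
    intro R' hR'
    rw [hμ']
    apply Finset.sum_congr _ (fun _ _ => rfl)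
    simp only [Finset.mem_filter, Finset.mem_powerset] at hR'
    ext R
    simp only [Finset.mem_filter, Finset.mem_univ, true_and]
    constructor
    · rintro ⟨hne, heq⟩
      refine ⟨⟨hne, ?_, ?_, ?_⟩, heq⟩
      · rw [heq]; exact hR'.2.1
      · rw [heq]; exact hR'.1
      · rw [heq]; exact hR'.2.2
    · rintro ⟨⟨hne, _, _, _⟩, heq⟩; exact ⟨hne, heq⟩
  case hmap =>
    intro R hR
    simp only [Finset.mem_filter, Finset.mem_univ, true_and] at hR
    simp only [Finset.mem_filter, Finset.mem_powerset]
    exact ⟨hR.2.2.1, hR.2.1, hR.2.2.2⟩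

lemma touch_union_ge (n : ℕ) (μ μ' : Finset (Fin n) → ℝ≥0) (PG : Finset (Fin n))
    (hμ' : ∀ R' : Finset (Fin n),
      μ' R' = ∑ R ∈ Finset.univ.filter (fun R : Finset (Fin n) => R.Nonempty ∧ R \ PG = R'), μ R)
    (T : Finset (Fin n)) {A' B' S' : Finset (Fin n)}
    (hA : A' ⊆ S') (hB : B' ⊆ S') :
    touchMass n μ PG A' + touchMass n μ' T B' ≤ touchMass n μ (PG ∪ T) S' := by
  classical
  rw [touch_fiber n μ μ' PG hμ' T B']
  unfold touchMass
  apply sum_sum_le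
  · intro R hR
    simp only [Finset.mem_filter, Finset.mem_powerset] at hR ⊢
    refine ⟨hR.1.trans Finset.subset_union_left, hR.2.1, ?_⟩
    obtain ⟨x, hx⟩ := hR.2.2
    obtain ⟨hx1, hx2⟩ := Finset.mem_inter.1 hx
    exact ⟨x, Finset.mem_inter.2 ⟨hx1, hA hx2⟩⟩
  · intro R hR
    simp only [Finset.mem_filter, Finset.mem_univ, true_and] at hR
    simp only [Finset.mem_filter, Finset.mem_powerset]
    obtain ⟨hne, hdne, hdT, hdB⟩ := hR
    refine ⟨?_, hne, ?_⟩
    · intro x hx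
      by_cases hxPG : x ∈ PG
      · exact Finset.mem_union_left _ hxPG
      · exact Finset.mem_union_right _ (hdT (Finset.mem_sdiff.2 ⟨hx, hxPG⟩))
    · obtain ⟨x, hx⟩ := hdB
      obtain ⟨hx1, hx2⟩ := Finset.mem_inter.1 hx
      exact ⟨x, Finset.mem_inter.2 ⟨(Finset.mem_sdiff.1 hx1).1, hB hx2⟩⟩
  · rw [Finset.disjoint_left]
    intro R hR1 hR2
    simp only [Finset.mem_filter, Finset.mem_powerset, Finset.mem_univ, true_and] at hR1 hR2
    obtain ⟨x, hx⟩ := hR2.2.1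
    exact (Finset.mem_sdiff.1 hx).2 (hR1.1 (Finset.mem_sdiff.1 hx).1)

lemma memD_singleton (n : ℕ) (f : Fin n → ℝ≥0 → ℝ) (μ : Finset (Fin n) → ℝ≥0) (k : Fin n) :
    MemD n f μ Finset.univ {k} (f k (innerMass n μ {k})) := by
  classical
  have hEq : EqDistOn n f {k} (innerMass n μ {k}) (f k (innerMass n μ {k})) := by
    refine ⟨fun _ => innerMass n μ {k}, Finset.sum_singleton _ _, ?_⟩
    intro j hj
    rw [Finset.mem_singleton] at hj
    rw [hj]
  refine ⟨Finset.singleton_nonempty k, Finset.subset_univ _, hEq, ?_⟩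
  intro S' hS' hne
  have hSeq : S' = {k} := by
    rcases Finset.subset_singleton_iff.1 hS' with h | h
    · exact absurd h (Finset.nonempty_iff_ne_empty.1 hne)
    · exact h
  subst hSeq
  exact ⟨innerMass n μ {k}, le_of_eq (touch_self n μ {k}).symm, hEq⟩


lemma absorb (n : ℕ) (f : Fin n → ℝ≥0 → ℝ) (μ : Finset (Fin n) → ℝ≥0) (hG : ℝ)
    (K : Finset (Fin n))
    (hall : ∀ j ∈ K, ∃ S, MemD n f μ Finset.univ S hG ∧ j ∈ S) :
    ∃ U, K ⊆ U ∧ (∀ i ∈ U, ∃ S, MemD n f μ Finset.univ S hG ∧ i ∈ S) ∧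
      ∀ A' ⊆ U, ∑ j ∈ A', aMin (f j) hG ≤ touchMass n μ U A' := by
  classical
  induction K using Finset.induction_on with
  | empty =>
    refine ⟨∅, Finset.Subset.refl _, by simp, ?_⟩
    intro A' hA'
    rw [Finset.subset_empty.1 hA']
    simp
  | @insert j K hjK ih =>
    obtain ⟨U, hKU, hUmem, hUt⟩ := ih (fun i hi => hall i (Finset.mem_insert_of_mem hi))
    obtain ⟨Sj, hSjD, hjSj⟩ := hall j (Finset.mem_insert_self j K)
    refine ⟨Sj ∪ U, ?_, ?_, ?_⟩
    · intro i hi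
      rcases Finset.mem_insert.1 hi with h | h
      · exact Finset.mem_union_left _ (h ▸ hjSj)
      · exact Finset.mem_union_right _ (hKU h)
    · intro i hi
      rcases Finset.mem_union.1 hi with h | h
      · exact ⟨Sj, hSjD, h⟩
      · exact hUmem i h
    · intro A' hA'
      have hA2U : A' \ Sj ⊆ U := by
        intro x hx
        obtain ⟨hx1, hx2⟩ := Finset.mem_sdiff.1 hx
        rcases Finset.mem_union.1 (hA' hx1) with h | h
        · exact absurd h hx2
        · exact h
      have h1 : ∑ i ∈ A' ∩ Sj, aMin (f i) hG ≤ touchMass n μ Sj (A' ∩ Sj) := by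
        rcases (A' ∩ Sj).eq_empty_or_nonempty with h | h
        · rw [h]; simp
        · obtain ⟨t, ht, νa, hνa1, hνa2⟩ := hSjD.2.2.2 (A' ∩ Sj) Finset.inter_subset_right h
          refine le_trans (Finset.sum_le_sum fun i hi => aMin_le (hνa2 i hi)) ?_
          rw [hνa1]; exact ht
      have h2 : ∑ i ∈ A' \ Sj, aMin (f i) hG ≤ touchMass n μ U (A' \ Sj) := hUt _ hA2U
      have h3 : touchMass n μ Sj (A' ∩ Sj) + touchMass n μ U (A' \ Sj)
          ≤ touchMass n μ (Sj ∪ U) A' := by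
        unfold touchMass
        apply sum_sum_le
        · intro R hR
          simp only [Finset.mem_filter, Finset.mem_powerset] at hR ⊢
          refine ⟨hR.1.trans Finset.subset_union_left, hR.2.1, ?_⟩
          obtain ⟨x, hx⟩ := hR.2.2
          obtain ⟨hx1, hx2⟩ := Finset.mem_inter.1 hx
          exact ⟨x, Finset.mem_inter.2 ⟨hx1, (Finset.mem_inter.1 hx2).1⟩⟩
        · intro R hR
          simp only [Finset.mem_filter, Finset.mem_powerset] at hR ⊢
          refine ⟨hR.1.trans Finset.subset_union_right, hR.2.1, ?_⟩
          obtain ⟨x, hx⟩ := hR.2.2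
          obtain ⟨hx1, hx2⟩ := Finset.mem_inter.1 hx
          exact ⟨x, Finset.mem_inter.2 ⟨hx1, (Finset.mem_sdiff.1 hx2).1⟩⟩
        · rw [Finset.disjoint_left]
          intro R hR1 hR2
          simp only [Finset.mem_filter, Finset.mem_powerset] at hR1 hR2
          obtain ⟨x, hx⟩ := hR2.2.2
          obtain ⟨hx1, hx2⟩ := Finset.mem_inter.1 hx
          exact (Finset.mem_sdiff.1 hx2).2 (hR1.1 hx1)
      calc ∑ i ∈ A', aMin (f i) hG
          = ∑ i ∈ A' ∩ Sj, aMin (f i) hG + ∑ i ∈ A' \ Sj, aMin (f i) hG :=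
            (Finset.sum_inter_add_sum_sdiff _ _ _).symm
        _ ≤ touchMass n μ Sj (A' ∩ Sj) + touchMass n μ U (A' \ Sj) := add_le_add h1 h2
        _ ≤ touchMass n μ (Sj ∪ U) A' := h3


lemma lemA (n : ℕ) (f : Fin n → ℝ≥0 → ℝ)
    (hmono : ∀ j, Monotone (f j)) (hcont : ∀ j, Continuous (f j))
    (W : Finset (Fin n)) (hW : W.Nonempty) (m : ℝ≥0) (L₀ : ℝ)
    (hatt : ∀ k ∈ W, ∃ x, f k x = L₀)
    (hsum : ∑ k ∈ W, aMin (f k) L₀ ≤ m) :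
    ∃ L, L₀ ≤ L ∧ (∀ k ∈ W, ∃ x, f k x = L) ∧ (∑ k ∈ W, aMin (f k) L ≤ m) ∧
      ∃ ν : Fin n → ℝ≥0, (∑ k ∈ W, ν k = m) ∧ ∀ k ∈ W, f k (ν k) = L := by
  classical
  have hf0 : ∀ k ∈ W, f k 0 ≤ L₀ := fun k hk => by
    obtain ⟨x, hx⟩ := hatt k hk; exact hx ▸ hmono k (zero_le : 0 ≤ x)
  set SS : Set ℝ := {L | L₀ ≤ L ∧ (∀ k ∈ W, ∃ x, f k x = L) ∧ ∑ k ∈ W, aMin (f k) L ≤ m}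
    with hSS
  have hL₀S : L₀ ∈ SS := ⟨le_refl _, hatt, hsum⟩
  have hSSne : SS.Nonempty := ⟨L₀, hL₀S⟩
  obtain ⟨k₀, hk₀⟩ := hW
  have hsingle : ∀ L ∈ SS, ∀ k ∈ W, aMin (f k) L ≤ m := fun L hL k hk =>
    le_trans (Finset.single_le_sum (f := fun j => aMin (f j) L) (fun i _ => zero_le) hk) hL.2.2
  have hbdd : BddAbove SS := by
    refine ⟨f k₀ m, fun L hL => ?_⟩
    have h1 : f k₀ (aMin (f k₀) L) = L := f_aMin (hcont k₀) (hL.2.1 k₀ hk₀)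
    calc L = f k₀ (aMin (f k₀) L) := h1.symm
      _ ≤ f k₀ m := hmono k₀ (hsingle L hL k₀ hk₀)
  set Ls : ℝ := sSup SS with hLs
  have hL₀Ls : L₀ ≤ Ls := le_csSup hbdd hL₀S
  -- the limit points x_k
  have hxk : ∀ k ∈ W, ∃ x : ℝ≥0, x ≤ m ∧ f k x = Ls ∧ (∀ L ∈ SS, aMin (f k) L ≤ x) ∧
      ∀ z, z < x → ∃ L ∈ SS, z < aMin (f k) L := by
    intro k hk
    set A : Set ℝ≥0 := (fun L => aMin (f k) L) '' SS with hA
    have hAne : A.Nonempty := ⟨_, ⟨L₀, hL₀S, rfl⟩⟩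
    have hAub : ∀ y ∈ A, y ≤ m := by rintro y ⟨L, hL, rfl⟩; exact hsingle L hL k hk
    have hAbdd : BddAbove A := ⟨m, hAub⟩
    set x : ℝ≥0 := sSup A with hx
    have hxm : x ≤ m := csSup_le hAne hAub
    have hub : ∀ L ∈ SS, aMin (f k) L ≤ x := fun L hL => le_csSup hAbdd ⟨L, hL, rfl⟩
    have hge : Ls ≤ f k x := by
      apply csSup_le hSSne
      intro L hL
      have h1 : f k (aMin (f k) L) = L := f_aMin (hcont k) (hL.2.1 k hk)
      calc L = f k (aMin (f k) L) := h1.symm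
        _ ≤ f k x := hmono k (hub L hL)
    have hle : f k x ≤ Ls := by
      have hclosure : x ∈ closure A := csSup_mem_closure hAne hAbdd
      have hsubset : A ⊆ {y : ℝ≥0 | f k y ≤ Ls} := by
        rintro y ⟨L, hL, rfl⟩
        have h1 : f k (aMin (f k) L) = L := f_aMin (hcont k) (hL.2.1 k hk)
        simp only [Set.mem_setOf_eq, h1]
        exact le_csSup hbdd hL
      have hcl : IsClosed {y : ℝ≥0 | f k y ≤ Ls} := isClosed_le (hcont k) continuous_const
      exact (closure_minimal hsubset hcl) hclosure
    refine ⟨x, hxm, le_antisymm hle hge, hub, ?_⟩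
    intro z hz
    obtain ⟨y, ⟨L, hL, rfl⟩, hy⟩ := exists_lt_of_lt_csSup hAne hz
    exact ⟨L, hL, hy⟩
  choose! X hX1 hX2 hX3 hX4 using hxk
  -- sum of X over W is at most m
  have hsumX : ∑ k ∈ W, X k ≤ m := by
    refine le_of_forall_pos_le_add ?_
    intro ε hε
    have hcardne : ((W.card : ℝ≥0)) ≠ 0 := by
      simp only [ne_eq, Nat.cast_eq_zero, Finset.card_eq_zero]
      exact Finset.nonempty_iff_ne_empty.1 ⟨k₀, hk₀⟩
    set ε' : ℝ≥0 := ε / W.card with hε'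
    have hε'pos : 0 < ε' := by
      apply div_pos hε
      exact lt_of_le_of_ne zero_le (Ne.symm hcardne)
    have hLk : ∀ k ∈ W, ∃ L, L ∈ SS ∧ X k ≤ aMin (f k) L + ε' := by
      intro k hk
      by_cases hle : X k ≤ ε'
      · exact ⟨L₀, hL₀S, le_trans hle le_add_self⟩
      · push_neg at hle
        have h1 : X k - ε' < X k := tsub_lt_self (lt_of_le_of_lt zero_le hle) hε'pos
        obtain ⟨L, hL, hgt⟩ := hX4 k hk (X k - ε') h1
        refine ⟨L, hL, ?_⟩
        calc X k = X k - ε' + ε' := (tsub_add_cancel_of_le hle.le).symm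
          _ ≤ aMin (f k) L + ε' := add_le_add_left hgt.le ε'
    choose! LL hLL1 hLL2 using hLk
    have himgne : (W.image LL).Nonempty := ⟨LL k₀, Finset.mem_image_of_mem LL hk₀⟩
    set Lbar : ℝ := (W.image LL).max' himgne with hLbar
    have hLbarS : Lbar ∈ SS := by
      obtain ⟨k, hk, heq⟩ := Finset.mem_image.1 ((W.image LL).max'_mem himgne)
      rw [hLbar, ← heq]
      exact hLL1 k hk
    have hle2 : ∀ k ∈ W, X k ≤ aMin (f k) Lbar + ε' := by
      intro k hk
      refine le_trans (hLL2 k hk) (add_le_add_left ?_ ε')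
      refine aMin_mono (hmono k) (hcont k) ((hLL1 k hk).2.1 k hk) (hLbarS.2.1 k hk) ?_
      exact Finset.le_max' _ _ (Finset.mem_image_of_mem LL hk)
    calc ∑ k ∈ W, X k ≤ ∑ k ∈ W, (aMin (f k) Lbar + ε') := Finset.sum_le_sum hle2
      _ = ∑ k ∈ W, aMin (f k) Lbar + W.card • ε' := by
          rw [Finset.sum_add_distrib, Finset.sum_const]
      _ ≤ m + ε := by
          refine add_le_add hLbarS.2.2 ?_
          rw [nsmul_eq_mul, hε', mul_comm]
          rw [div_mul_cancel₀ _ hcardne]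
  have hattLs : ∀ k ∈ W, ∃ x, f k x = Ls := fun k hk => ⟨X k, hX2 k hk⟩
  have hsumLs : ∑ k ∈ W, aMin (f k) Ls ≤ m :=
    le_trans (Finset.sum_le_sum fun k hk => aMin_le (hX2 k hk)) hsumX
  have hsingleLs : ∀ k ∈ W, aMin (f k) Ls ≤ m := fun k hk =>
    le_trans (Finset.single_le_sum (f := fun j => aMin (f j) Ls) (fun i _ => zero_le) hk) hsumLs
  -- the maximal points B_k
  have hBk : ∀ k ∈ W, ∃ B : ℝ≥0, B ≤ m ∧ f k B ≤ Ls ∧ aMin (f k) Ls ≤ B ∧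
      ∀ y, y ≤ m → f k y ≤ Ls → y ≤ B := by
    intro k hk
    set s : Set ℝ≥0 := {y | y ≤ m} ∩ {y | f k y ≤ Ls} with hs
    have hfm : f k (aMin (f k) Ls) = Ls := f_aMin (hcont k) (hattLs k hk)
    have hne : s.Nonempty := ⟨aMin (f k) Ls, hsingleLs k hk, le_of_eq hfm⟩
    have hcl : IsClosed s :=
      IsClosed.inter (isClosed_le continuous_id continuous_const)
        (isClosed_le (hcont k) continuous_const)
    have hbddA : BddAbove s := ⟨m, fun y hy => hy.1⟩
    have hmem := hcl.csSup_mem hne hbddA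
    exact ⟨sSup s, hmem.1, hmem.2, le_csSup hbddA ⟨hsingleLs k hk, le_of_eq hfm⟩,
      fun y h1 h2 => le_csSup hbddA ⟨h1, h2⟩⟩
  choose! B hB1 hB2 hB3 hB4 using hBk
  by_cases hcase : m ≤ ∑ k ∈ W, B k
  · -- can distribute m at level Ls
    set u : Fin n → ℝ≥0 := fun k => aMin (f k) Ls with hu
    have hfu : ∀ k ∈ W, f k (u k) = Ls := fun k hk => f_aMin (hcont k) (hattLs k hk)
    set su : ℝ≥0 := ∑ k ∈ W, u k with hsu
    set sb : ℝ≥0 := ∑ k ∈ W, B k with hsb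
    have hsum_le : su ≤ m := hsumLs
    rcases eq_or_lt_of_le hsum_le with heq | hlt
    · exact ⟨Ls, hL₀Ls, hattLs, hsumLs, u, heq, hfu⟩
    · have hsusb : su < sb := lt_of_lt_of_le hlt hcase
      have hdpos : 0 < sb - su := tsub_pos_of_lt hsusb
      have hdne : sb - su ≠ 0 := pos_iff_ne_zero.1 hdpos
      set θ : ℝ≥0 := (m - su) / (sb - su) with hθ
      have hθ1 : θ ≤ 1 := by
        rw [hθ, div_le_one hdpos]
        exact tsub_le_tsub_right hcase su
      set ν : Fin n → ℝ≥0 := fun k => u k + (B k - u k) * θ with hν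
      have hνB : ∀ k ∈ W, ν k ≤ B k := by
        intro k hk
        calc ν k ≤ u k + (B k - u k) * 1 :=
              add_le_add_right (mul_le_mul_right hθ1 _) _
          _ = B k := by rw [mul_one]; exact add_tsub_cancel_of_le (hB3 k hk)
      refine ⟨Ls, hL₀Ls, hattLs, hsumLs, ν, ?_, ?_⟩
      · simp only [hν]
        rw [Finset.sum_add_distrib, ← Finset.sum_mul,
          Finset.sum_tsub_distrib W (fun k hk => hB3 k hk)]
        rw [← hsu, ← hsb]
        have hkey : (sb - su) * θ = m - su := by
          rw [hθ, mul_comm, div_mul_cancel₀ _ hdne]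
        rw [hkey]
        exact add_tsub_cancel_of_le hsum_le
      · intro k hk
        refine le_antisymm (le_trans (hmono k (hνB k hk)) (hB2 k hk)) ?_
        calc Ls = f k (u k) := (hfu k hk).symm
          _ ≤ f k (ν k) := hmono k le_self_add
  · -- contradiction: the level can be raised
    push_neg at hcase
    exfalso
    have hBlt : ∀ k ∈ W, B k < m :=
      fun k hk => lt_of_le_of_lt (Finset.single_le_sum (f := fun j => B j) (fun i _ => zero_le) hk) hcase
    have hcardne : ((W.card : ℝ≥0)) ≠ 0 := by
      simp only [ne_eq, Nat.cast_eq_zero, Finset.card_eq_zero]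
      exact Finset.nonempty_iff_ne_empty.1 ⟨k₀, hk₀⟩
    set δ : ℝ≥0 := m - ∑ k ∈ W, B k with hδ
    have hδpos : 0 < δ := tsub_pos_of_lt hcase
    set δ' : ℝ≥0 := δ / W.card with hδ'
    have hδ'pos : 0 < δ' := div_pos hδpos (lt_of_le_of_ne zero_le (Ne.symm hcardne))
    set y : Fin n → ℝ≥0 := fun k => min m (B k + δ') with hy
    have hy1 : ∀ k ∈ W, B k < y k := fun k hk =>
      lt_min (hBlt k hk) (lt_add_of_pos_right _ hδ'pos)
    have hy2 : ∀ k ∈ W, Ls < f k (y k) := by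
      intro k hk
      by_contra h
      push_neg at h
      exact absurd (hB4 k hk (y k) (min_le_left _ _) h) (not_le.2 (hy1 k hk))
    set L' : ℝ := W.inf' ⟨k₀, hk₀⟩ (fun k => f k (y k)) with hL'
    have hLsL' : Ls < L' := by
      rw [hL']
      exact (Finset.lt_inf'_iff _).2 hy2
    have hc : ∀ k ∈ W, ∃ c, c ≤ y k ∧ f k c = L' := by
      intro k hk
      have hlow : f k 0 ≤ L' := le_trans (hf0 k hk) (le_trans hL₀Ls hLsL'.le)
      have hhigh : L' ≤ f k (y k) := Finset.inf'_le _ hk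
      obtain ⟨c, hc1, hc2⟩ := intermediate_value_Icc (zero_le : 0 ≤ y k)
        (hcont k).continuousOn ⟨hlow, hhigh⟩
      exact ⟨c, hc1.2, hc2⟩
    have hL'S : L' ∈ SS := by
      refine ⟨le_trans hL₀Ls hLsL'.le, ?_, ?_⟩
      · intro k hk
        obtain ⟨c, _, hc2⟩ := hc k hk
        exact ⟨c, hc2⟩
      · have hbound : ∀ k ∈ W, aMin (f k) L' ≤ B k + δ' := by
          intro k hk
          obtain ⟨c, hc1, hc2⟩ := hc k hk
          exact le_trans (aMin_le hc2) (le_trans hc1 (min_le_right _ _))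
        calc ∑ k ∈ W, aMin (f k) L' ≤ ∑ k ∈ W, (B k + δ') := Finset.sum_le_sum hbound
          _ = ∑ k ∈ W, B k + W.card • δ' := by rw [Finset.sum_add_distrib, Finset.sum_const]
          _ = ∑ k ∈ W, B k + δ := by
              rw [nsmul_eq_mul, hδ', mul_comm, div_mul_cancel₀ _ hcardne]
          _ = m := add_tsub_cancel_of_le hcase.le
    exact absurd (le_csSup hbdd hL'S) (not_le.2 hLsL')


lemma lemB (n : ℕ) (f : Fin n → ℝ≥0 → ℝ) (μ : Finset (Fin n) → ℝ≥0)
    (hmono : ∀ j, Monotone (f j)) (hcont : ∀ j, Continuous (f j)) :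
    ∀ (N : ℕ) (W : Finset (Fin n)), W.card ≤ N → W.Nonempty → ∀ (L₀ : ℝ),
    (∀ k ∈ W, ∃ x, f k x = L₀) → (∑ k ∈ W, aMin (f k) L₀ ≤ innerMass n μ W) →
    ∃ W₁ e, L₀ ≤ e ∧ MemD n f μ Finset.univ W₁ e := by
  classical
  intro N
  induction N with
  | zero =>
    intro W hcard hne
    obtain ⟨k, hk⟩ := hne
    exact absurd (Finset.card_pos.2 ⟨k, hk⟩) (by omega)
  | succ N ih =>
    intro W hcard hne L₀ hatt hsum
    obtain ⟨L, hL₀L, hattL, hsumL, ν, hν1, hν2⟩ :=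
      lemA n f hmono hcont W hne (innerMass n μ W) L₀ hatt hsum
    have hνge : ∀ k ∈ W, aMin (f k) L ≤ ν k := fun k hk => aMin_le (hν2 k hk)
    by_cases hviol : ∃ S', S' ⊆ W ∧ S'.Nonempty ∧ touchMass n μ W S' < ∑ k ∈ S', aMin (f k) L
    · obtain ⟨S', hS'W, hS'ne, hS'v⟩ := hviol
      have hSne : (W \ S').Nonempty := by
        by_contra h
        rw [Finset.not_nonempty_iff_eq_empty, Finset.sdiff_eq_empty_iff_subset] at h
        have heqWS : S' = W := Finset.Subset.antisymm hS'W h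
        rw [heqWS, touch_self] at hS'v
        have : ∑ k ∈ W, aMin (f k) L ≤ innerMass n μ W := by
          rw [← hν1]; exact Finset.sum_le_sum hνge
        exact absurd this (not_le.2 hS'v)
      have hcard' : (W \ S').card ≤ N := by
        have h1 : (W \ S').card < W.card := Finset.card_lt_card (Finset.sdiff_ssubset hS'W hS'ne)
        omega
      have hattC : ∀ k ∈ W \ S', ∃ x, f k x = L := fun k hk =>
        hattL k (Finset.mem_sdiff.1 hk).1
      have h2 : touchMass n μ W S' < ∑ k ∈ S', ν k :=
        lt_of_lt_of_le hS'v (Finset.sum_le_sum fun k hk => hνge k (hS'W hk))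
      have h3 : ∑ k ∈ W \ S', ν k ≤ innerMass n μ (W \ S') := by
        by_contra hcon
        push_neg at hcon
        have heq : ∑ k ∈ S', ν k + ∑ k ∈ W \ S', ν k
            = touchMass n μ W S' + innerMass n μ (W \ S') := by
          rw [add_comm, Finset.sum_sdiff hS'W, hν1]
          exact inner_split n μ hS'W
        exact (ne_of_lt (add_lt_add h2 hcon)) heq.symm
      have hsumC : ∑ k ∈ W \ S', aMin (f k) L ≤ innerMass n μ (W \ S') :=
        le_trans (Finset.sum_le_sum fun k hk => hνge k (Finset.mem_sdiff.1 hk).1) h3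
      obtain ⟨W₁, e, he, hmem⟩ := ih (W \ S') hcard' hSne L hattC hsumC
      exact ⟨W₁, e, le_trans hL₀L he, hmem⟩
    · push_neg at hviol
      refine ⟨W, L, hL₀L, hne, Finset.subset_univ W, ⟨ν, hν1, hν2⟩, ?_⟩
      intro S' hS' hS'ne
      refine ⟨∑ k ∈ S', aMin (f k) L, hviol S' hS' hS'ne, fun k => aMin (f k) L, rfl, ?_⟩
      intro k hk
      exact f_aMin (hcont k) (hattL k (hS' hk))

end PistonsAux

open PistonsAux in
/-- Pistons stopping order: for continuous (nondecreasing)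
cost functions, if `P_G ≠ {1,…,n}`, then `h_G > h_{G − P_G}`, where `G − P_G`
is the game on the resources outside `P_G` in which the mass of each nonempty
type `R'` is `Σ {μ R : R nonempty, R \ P_G = R'}`. -/
theorem hG_gt_hG_sub_PG (n : ℕ) (f : Fin n → ℝ≥0 → ℝ)
    (μ : Finset (Fin n) → ℝ≥0)
    (hmono : ∀ j, Monotone (f j)) (hcont : ∀ j, Continuous (f j))
    (hG : ℝ) (hhG : IsHG n f μ Finset.univ hG)
    (PG : Finset (Fin n))
    (hPG : ∀ j : Fin n, j ∈ PG ↔ ∃ S, MemD n f μ Finset.univ S hG ∧ j ∈ S)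
    (hPGne : PG ≠ Finset.univ)
    (μ' : Finset (Fin n) → ℝ≥0)
    (hμ' : ∀ R' : Finset (Fin n),
      μ' R' = ∑ R ∈ Finset.univ.filter (fun R : Finset (Fin n) => R.Nonempty ∧ R \ PG = R'), μ R)
    (hG' : ℝ) (hhG' : IsHG n f μ' (Finset.univ \ PG) hG') :
    hG' < hG := by
  classical
  by_contra hcon
  push_neg at hcon
  obtain ⟨⟨T, hT⟩, _⟩ := hhG'
  obtain ⟨_, hmax⟩ := hhG
  obtain ⟨hTne, hTsub, ⟨νT, hνT1, hνT2⟩, hTM⟩ := hT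
  have hTPG : ∀ k ∈ T, k ∉ PG := fun k hk => (Finset.mem_sdiff.1 (hTsub hk)).2
  have hf0 : ∀ k : Fin n, f k 0 ≤ hG := by
    intro k
    have h1 := hmax {k} _ (memD_singleton n f μ k)
    exact le_trans (hmono k zero_le) h1
  have hattT' : ∀ k ∈ T, ∃ x, f k x = hG' := fun k hk => ⟨νT k, hνT2 k hk⟩
  have hattTG : ∀ k ∈ T, ∃ x, f k x = hG := by
    intro k hk
    obtain ⟨c, _, hc⟩ := att_of_le (hcont k) (hattT' k hk) (hf0 k) hcon
    exact ⟨c, hc⟩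
  obtain ⟨U, hPGU, hUPG, hUt⟩ := absorb n f μ hG PG (fun j hj => (hPG j).1 hj)
  have hUeq : U = PG := Finset.Subset.antisymm (fun i hi => (hPG i).2 (hUPG i hi)) hPGU
  rw [hUeq] at hUt
  have hattPG : ∀ j ∈ PG, ∃ x, f j x = hG := by
    intro j hj
    obtain ⟨S, hS, hjS⟩ := (hPG j).1 hj
    obtain ⟨ν, hν1, hν2⟩ := hS.2.2.1
    exact ⟨ν j, hν2 j hjS⟩
  set W : Finset (Fin n) := PG ∪ T with hW
  have hWne : W.Nonempty := by
    obtain ⟨k, hk⟩ := hTne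
    exact ⟨k, Finset.mem_union_right _ hk⟩
  have hattW : ∀ k ∈ W, ∃ x, f k x = hG := by
    intro k hk
    rcases Finset.mem_union.1 hk with h | h
    · exact hattPG k h
    · exact hattTG k h
  have hdisj : Disjoint PG T := Finset.disjoint_left.2 (fun a ha hb => hTPG a hb ha)
  have hTaMin : ∀ k ∈ T, aMin (f k) hG ≤ νT k := fun k hk =>
    le_trans (aMin_mono (hmono k) (hcont k) (hattTG k hk) (hattT' k hk) hcon)
      (aMin_le (hνT2 k hk))
  have hmass : ∑ k ∈ W, aMin (f k) hG ≤ innerMass n μ W := by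
    rw [hW, Finset.sum_union hdisj]
    have h1 : ∑ j ∈ PG, aMin (f j) hG ≤ touchMass n μ PG PG := hUt PG (Finset.Subset.refl _)
    have h2 : ∑ k ∈ T, aMin (f k) hG ≤ touchMass n μ' T T := by
      rw [touch_self]
      rw [← hνT1]
      exact Finset.sum_le_sum hTaMin
    refine le_trans (add_le_add h1 h2) ?_
    rw [← touch_self n μ (PG ∪ T)]
    exact touch_union_ge n μ μ' PG hμ' T Finset.subset_union_left Finset.subset_union_right
  obtain ⟨L, hgL, hattL, hsumL, ν, hν1, hν2⟩ :=
    lemA n f hmono hcont W hWne (innerMass n μ W) hG hattW hmass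
  rcases eq_or_lt_of_le hgL with heq | hlt
  · -- L = hG : then W itself is in D_G with value hG, so T ⊆ P_G, contradiction
    have hmemW : MemD n f μ Finset.univ W hG := by
      refine ⟨hWne, Finset.subset_univ _, ⟨ν, hν1, fun k hk => (hν2 k hk).trans heq.symm⟩, ?_⟩
      intro S' hS' hS'ne
      have hB'T : S' \ PG ⊆ T := by
        intro x hx
        obtain ⟨h1, h2⟩ := Finset.mem_sdiff.1 hx
        rcases Finset.mem_union.1 (hS' h1) with h | h
        · exact absurd h h2
        · exact h
      have h1 : ∑ j ∈ S' ∩ PG, aMin (f j) hG ≤ touchMass n μ PG (S' ∩ PG) :=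
        hUt _ Finset.inter_subset_right
      have h2 : ∑ k ∈ S' \ PG, aMin (f k) hG ≤ touchMass n μ' T (S' \ PG) := by
        rcases (S' \ PG).eq_empty_or_nonempty with h | h
        · rw [h]; simp
        · obtain ⟨t, ht, νb, hνb1, hνb2⟩ := hTM (S' \ PG) hB'T h
          have hstep : ∀ k ∈ S' \ PG, aMin (f k) hG ≤ νb k := by
            intro k hk
            exact le_trans
              (aMin_mono (hmono k) (hcont k) (hattTG k (hB'T hk)) ⟨νb k, hνb2 k hk⟩ hcon)
              (aMin_le (hνb2 k hk))
          calc ∑ k ∈ S' \ PG, aMin (f k) hG ≤ ∑ k ∈ S' \ PG, νb k := Finset.sum_le_sum hstep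
            _ = t := hνb1
            _ ≤ _ := ht
      have h3 : touchMass n μ PG (S' ∩ PG) + touchMass n μ' T (S' \ PG)
          ≤ touchMass n μ (PG ∪ T) S' :=
        touch_union_ge n μ μ' PG hμ' T Finset.inter_subset_left Finset.sdiff_subset
      refine ⟨∑ k ∈ S', aMin (f k) hG, ?_, fun k => aMin (f k) hG, rfl, ?_⟩
      · calc ∑ k ∈ S', aMin (f k) hG
            = ∑ j ∈ S' ∩ PG, aMin (f j) hG + ∑ k ∈ S' \ PG, aMin (f k) hG :=
              (Finset.sum_inter_add_sum_sdiff _ _ _).symm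
          _ ≤ touchMass n μ PG (S' ∩ PG) + touchMass n μ' T (S' \ PG) := add_le_add h1 h2
          _ ≤ touchMass n μ W S' := h3
      · intro k hk
        exact f_aMin (hcont k) (hattW k (hS' hk))
    obtain ⟨k, hk⟩ := hTne
    exact hTPG k hk ((hPG k).2 ⟨W, hmemW, Finset.mem_union_right _ hk⟩)
  · obtain ⟨W₁, e, he, hmem⟩ :=
      lemB n f μ hmono hcont W.card W (le_refl _) hWne L hattL hsumL
    exact absurd (hmax W₁ e hmem) (not_le.2 (lt_of_lt_of_le hlt he))
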